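/- The Lie algebra T*su(2) (the T*-extension of su(2)) admits no k-symplectic structure for any k ≥ 1. -/

import Mathlib

set_option maxHeartbeats 1000000


section TStarExtension

variable {L : Type*} [LieRing L] [LieAlgebra ℝ L]

/-- The Lie ring structure of the `T*`-extension `T*g = g ⊕ g*` of a real Lie algebra `g`:
`[u + α, v + β] = [u,v] + ad*_u β − ad*_v α`, where `(ad*_u α)(v) = −α([u,v])`.
(Here `⁅u, β⁆ = ad*_u β` is the coadjoint action of Mathlib's
`Module.Dual.instLieRingModule`, for which `⁅u, β⁆ v = −β ⁅u, v⁆`.) -/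
instance tstarLieRing : LieRing (L × Module.Dual ℝ L) where
  bracket x y := (⁅x.1, y.1⁆, ⁅x.1, y.2⁆ - ⁅y.1, x.2⁆)
  add_lie x y z := by
    refine Prod.ext ?_ ?_
    · show ⁅(x + y).1, z.1⁆ = (⁅x.1, z.1⁆ + ⁅y.1, z.1⁆ : L)
      simp [add_lie]
    · show ⁅(x + y).1, z.2⁆ - ⁅z.1, (x + y).2⁆ =
        (⁅x.1, z.2⁆ - ⁅z.1, x.2⁆) + (⁅y.1, z.2⁆ - ⁅z.1, y.2⁆)
      simp only [Prod.fst_add, Prod.snd_add, add_lie, lie_add]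
      abel
  lie_add x y z := by
    refine Prod.ext ?_ ?_
    · show ⁅x.1, (y + z).1⁆ = (⁅x.1, y.1⁆ + ⁅x.1, z.1⁆ : L)
      simp [lie_add]
    · show ⁅x.1, (y + z).2⁆ - ⁅(y + z).1, x.2⁆ =
        (⁅x.1, y.2⁆ - ⁅y.1, x.2⁆) + (⁅x.1, z.2⁆ - ⁅z.1, x.2⁆)
      simp only [Prod.fst_add, Prod.snd_add, add_lie, lie_add]
      abel
  lie_self x := by
    refine Prod.ext ?_ ?_
    · show ⁅x.1, x.1⁆ = (0 : L)
      simp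
    · show ⁅x.1, x.2⁆ - ⁅x.1, x.2⁆ = (0 : Module.Dual ℝ L)
      simp
  leibniz_lie x y z := by
    refine Prod.ext ?_ ?_
    · show ⁅x.1, ⁅y.1, z.1⁆⁆ = (⁅⁅x.1, y.1⁆, z.1⁆ + ⁅y.1, ⁅x.1, z.1⁆⁆ : L)
      exact leibniz_lie _ _ _
    · show ⁅x.1, ⁅y.1, z.2⁆ - ⁅z.1, y.2⁆⁆ - ⁅⁅y.1, z.1⁆, x.2⁆ =
        (⁅⁅x.1, y.1⁆, z.2⁆ - ⁅z.1, ⁅x.1, y.2⁆ - ⁅y.1, x.2⁆⁆) +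
        (⁅y.1, ⁅x.1, z.2⁆ - ⁅z.1, x.2⁆⁆ - ⁅⁅x.1, z.1⁆, y.2⁆)
      simp only [lie_lie, lie_sub]
      abel

/-- The `T*`-extension is a Lie algebra over `ℝ`. -/
noncomputable instance tstarLieAlgebra : LieAlgebra ℝ (L × Module.Dual ℝ L) where
  lie_smul t x y := by
    refine Prod.ext ?_ ?_
    · show ⁅x.1, (t • y).1⁆ = t • ⁅x.1, y.1⁆
      rw [Prod.smul_fst, lie_smul]
    · show ⁅x.1, (t • y).2⁆ - ⁅(t • y).1, x.2⁆ = t • (⁅x.1, y.2⁆ - ⁅y.1, x.2⁆)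
      ext m
      simp only [Prod.smul_fst, Prod.smul_snd, LinearMap.sub_apply, LinearMap.smul_apply,
        Module.Dual.lie_apply, smul_lie, map_smul, smul_eq_mul, smul_sub]
      ring

/-- The canonical invariant bilinear form of the `T*`-extension:
`⟨u + α, v + β⟩ = α(v) + β(u)`. -/
def tstarForm (x y : L × Module.Dual ℝ L) : ℝ := x.2 y.1 + y.2 x.1

end TStarExtension

/-- A 2-cocycle on a real Lie algebra: an alternating bilinear form `θ` satisfying
`θ([u,v],w) + θ([v,w],u) + θ([w,u],v) = 0`. -/
def IsTwoCocycle {M : Type*} [LieRing M] [LieAlgebra ℝ M]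
    (θ : M →ₗ[ℝ] M →ₗ[ℝ] ℝ) : Prop :=
  (∀ u : M, θ u u = 0) ∧
  ∀ u v w : M, θ ⁅u, v⁆ w + θ ⁅v, w⁆ u + θ ⁅w, u⁆ v = 0

/-- A `k`-symplectic structure on a real Lie algebra `M` of dimension `n * (k+1)`. -/
def IsKSymplectic {M : Type*} [LieRing M] [LieAlgebra ℝ M] (n k : ℕ)
    (H : LieSubalgebra ℝ M) (θ : Fin k → (M →ₗ[ℝ] M →ₗ[ℝ] ℝ)) : Prop :=
  Module.finrank ℝ M = n * (k + 1) ∧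
  Module.finrank ℝ H = n * k ∧
  (∀ i, IsTwoCocycle (θ i)) ∧
  (∀ u : M, (∀ i, ∀ v : M, θ i u v = 0) → u = 0) ∧
  (∀ i, ∀ u ∈ H, ∀ v ∈ H, θ i u v = 0)




namespace TstarAux

def cp (v w : Fin 3 → ℝ) : Fin 3 → ℝ :=
  ![v 1 * w 2 - v 2 * w 1, v 2 * w 0 - v 0 * w 2, v 0 * w 1 - v 1 * w 0]

@[simp] lemma cp_apply0 (v w : Fin 3 → ℝ) : cp v w 0 = v 1 * w 2 - v 2 * w 1 := rfl
@[simp] lemma cp_apply1 (v w : Fin 3 → ℝ) : cp v w 1 = v 2 * w 0 - v 0 * w 2 := rfl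
@[simp] lemma cp_apply2 (v w : Fin 3 → ℝ) : cp v w 2 = v 0 * w 1 - v 1 * w 0 := rfl

def dot (v w : Fin 3 → ℝ) : ℝ := v 0 * w 0 + v 1 * w 1 + v 2 * w 2

lemma funext3 {v w : Fin 3 → ℝ} (h0 : v 0 = w 0) (h1 : v 1 = w 1) (h2 : v 2 = w 2) :
    v = w := by
  funext i
  match i with
  | 0 => exact h0
  | 1 => exact h1
  | 2 => exact h2

lemma cp_cp (v y : Fin 3 → ℝ) : cp v (cp y v) = dot v v • y - dot v y • v := by
  refine funext3 ?_ ?_ ?_ <;> simp [dot] <;> ring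

lemma dot_cp_left (x y : Fin 3 → ℝ) : dot (cp x y) x = 0 := by simp [dot]; ring

lemma dot_cp_right (x y : Fin 3 → ℝ) : dot (cp x y) y = 0 := by simp [dot]; ring

lemma eq_zero_of_dot_self (v : Fin 3 → ℝ) (h : dot v v = 0) : v = 0 := by
  simp only [dot] at h
  have h0 : v 0 = 0 := by nlinarith [sq_nonneg (v 0), sq_nonneg (v 1), sq_nonneg (v 2)]
  have h1 : v 1 = 0 := by nlinarith [sq_nonneg (v 0), sq_nonneg (v 1), sq_nonneg (v 2)]
  have h2 : v 2 = 0 := by nlinarith [sq_nonneg (v 0), sq_nonneg (v 1), sq_nonneg (v 2)]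
  exact funext3 h0 h1 h2

lemma dot_self_ne (v : Fin 3 → ℝ) (hv : v ≠ 0) : dot v v ≠ 0 :=
  fun h => hv (eq_zero_of_dot_self v h)

/-- CP1: an invariant subspace containing a nonzero vector is everything. -/
lemma invariant_eq_top (W : Submodule ℝ (Fin 3 → ℝ))
    (hinv : ∀ c : Fin 3 → ℝ, ∀ w ∈ W, cp c w ∈ W)
    (v : Fin 3 → ℝ) (hv : v ∈ W) (hv0 : v ≠ 0) : W = ⊤ := by
  rw [Submodule.eq_top_iff']
  intro y
  have hd := dot_self_ne v hv0
  have h1 : cp v (cp y v) ∈ W := hinv v _ (hinv y v hv)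
  have h2 : cp v (cp y v) + dot v y • v ∈ W := W.add_mem h1 (W.smul_mem _ hv)
  have h3 : cp v (cp y v) + dot v y • v = dot v v • y := by rw [cp_cp]; abel
  rw [h3] at h2
  have := W.smul_mem (dot v v)⁻¹ h2
  rwa [inv_smul_smul₀ hd] at this

lemma cp_eq_zero (x y : Fin 3 → ℝ) (hx : x ≠ 0) (h : cp x y = 0) :
    ∃ t : ℝ, y = t • x := by
  have e0 : x 1 * y 2 - x 2 * y 1 = 0 := congrFun h 0
  have e1 : x 2 * y 0 - x 0 * y 2 = 0 := congrFun h 1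
  have e2 : x 0 * y 1 - x 1 * y 0 = 0 := congrFun h 2
  have hj : x 0 ≠ 0 ∨ x 1 ≠ 0 ∨ x 2 ≠ 0 := by
    by_contra hc
    push_neg at hc
    exact hx (funext3 hc.1 hc.2.1 hc.2.2)
  rcases hj with hj | hj | hj
  · refine ⟨y 0 / x 0, funext3 ?_ ?_ ?_⟩ <;> simp only [Pi.smul_apply, smul_eq_mul] <;>
      field_simp <;> nlinarith [e0, e1, e2]
  · refine ⟨y 1 / x 1, funext3 ?_ ?_ ?_⟩ <;> simp only [Pi.smul_apply, smul_eq_mul] <;>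
      field_simp <;> nlinarith [e0, e1, e2]
  · refine ⟨y 2 / x 2, funext3 ?_ ?_ ?_⟩ <;> simp only [Pi.smul_apply, smul_eq_mul] <;>
      field_simp <;> nlinarith [e0, e1, e2]

/-- CP2: no 2-dimensional cross-closed subspace. -/
lemma no_two_dim (P : Submodule ℝ (Fin 3 → ℝ))
    (hP : ∀ x ∈ P, ∀ y ∈ P, cp x y ∈ P)
    (h2 : Module.finrank ℝ P = 2) : False := by
  have B : Module.Basis (Fin 2) ℝ P := Module.finBasisOfFinrankEq ℝ P h2
  set x : Fin 3 → ℝ := ((B 0 : P) : Fin 3 → ℝ) with hxdef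
  set y : Fin 3 → ℝ := ((B 1 : P) : Fin 3 → ℝ) with hydef
  have hxP : x ∈ P := (B 0).2
  have hyP : y ∈ P := (B 1).2
  have hzP : cp x y ∈ P := hP x hxP y hyP
  have hrep := B.sum_repr ⟨cp x y, hzP⟩
  rw [Fin.sum_univ_two] at hrep
  set a := B.repr ⟨cp x y, hzP⟩ 0
  set bb := B.repr ⟨cp x y, hzP⟩ 1
  have hz : cp x y = a • x + bb • y := by
    have := congrArg (Subtype.val) hrep
    simpa using this.symm
  have hzz : dot (cp x y) (cp x y) = 0 := by
    nth_rewrite 2 [hz]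
    have h4 : dot (cp x y) (a • x + bb • y)
        = a * dot (cp x y) x + bb * dot (cp x y) y := by
      simp [dot]; ring
    rw [h4, dot_cp_left, dot_cp_right]; ring
  have hz0 : cp x y = 0 := eq_zero_of_dot_self _ hzz
  have hx0 : x ≠ 0 := by
    intro hc
    exact B.ne_zero 0 (Subtype.ext (by simpa [hxdef] using hc))
  obtain ⟨t, ht⟩ := cp_eq_zero x y hx0 hz0
  have hBy : (B 1 : P) = t • (B 0 : P) := Subtype.ext (by simpa using ht)
  have h1 : B.repr (B 1) 1 = 1 := by simp
  rw [hBy] at h1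
  simp at h1

end TstarAux

section Coord
variable {L : Type*} [LieRing L] [LieAlgebra ℝ L]
variable (b : Module.Basis (Fin 3) ℝ L)

lemma equivFun_basis (i : Fin 3) : b.equivFun (b i) = Pi.single i 1 := by
  funext j
  rw [b.equivFun_self, Pi.single_apply]
  by_cases h : i = j
  · simp [h]
  · rw [if_neg h, if_neg fun hh => h hh.symm]

lemma coord_bracket (h12 : ⁅b 0, b 1⁆ = b 2) (h23 : ⁅b 1, b 2⁆ = b 0)
    (h31 : ⁅b 2, b 0⁆ = b 1) (x y : L) :
    b.equivFun ⁅x, y⁆ = TstarAux.cp (b.equivFun x) (b.equivFun y) := by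
  have e10 : ⁅b 1, b 0⁆ = -b 2 := by rw [← lie_skew, h12]
  have e21 : ⁅b 2, b 1⁆ = -b 0 := by rw [← lie_skew, h23]
  have e02 : ⁅b 0, b 2⁆ = -b 1 := by rw [← lie_skew, h31]
  have key : ⁅x, y⁆ =
      (b.repr x 1 * b.repr y 2 - b.repr x 2 * b.repr y 1) • b 0
      + (b.repr x 2 * b.repr y 0 - b.repr x 0 * b.repr y 2) • b 1
      + (b.repr x 0 * b.repr y 1 - b.repr x 1 * b.repr y 0) • b 2 := by
    conv_lhs => rw [← b.sum_repr x, ← b.sum_repr y]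
    rw [Fin.sum_univ_three, Fin.sum_univ_three]
    simp only [add_lie, lie_add, smul_lie, lie_smul, h12, h23, h31, e10, e21, e02, lie_self]
    module
  refine TstarAux.funext3 ?_ ?_ ?_ <;>
    simp [key, Module.Basis.equivFun_apply, map_add, map_smul, Finsupp.add_apply, Finsupp.smul_apply,
      Module.Basis.repr_self, Finsupp.single_apply] <;> ring

lemma dual_eval (α : Module.Dual ℝ L) (z : L) :
    α z = ∑ k, b.repr z k * α (b k) := by
  conv_lhs => rw [← b.sum_repr z]
  rw [map_sum]
  simp

lemma cp_single (c w : Fin 3 → ℝ) (i : Fin 3) :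
    TstarAux.cp c w i = -∑ k, TstarAux.cp c (Pi.single i 1) k * w k := by
  match i with
  | 0 => simp [Fin.sum_univ_three, Pi.single_apply]; ring
  | 1 => simp [Fin.sum_univ_three, Pi.single_apply]; ring
  | 2 => simp [Fin.sum_univ_three, Pi.single_apply]; ring

lemma coord_cobracket (h12 : ⁅b 0, b 1⁆ = b 2) (h23 : ⁅b 1, b 2⁆ = b 0)
    (h31 : ⁅b 2, b 0⁆ = b 1) (x : L) (α : Module.Dual ℝ L) (i : Fin 3) :
    ⁅x, α⁆ (b i) = TstarAux.cp (b.equivFun x) (fun k => α (b k)) i := by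
  rw [Module.Dual.lie_apply, dual_eval b α ⁅x, b i⁆, cp_single]
  refine neg_inj.mpr (Finset.sum_congr rfl fun k _ => ?_)
  congr 1
  calc b.repr ⁅x, b i⁆ k = b.equivFun ⁅x, b i⁆ k := by rw [b.equivFun_apply]
    _ = TstarAux.cp (b.equivFun x) (b.equivFun (b i)) k := by
        rw [coord_bracket b h12 h23 h31]
    _ = TstarAux.cp (b.equivFun x) (Pi.single i 1) k := by rw [equivFun_basis]

lemma cobr_table (h12 : ⁅b 0, b 1⁆ = b 2) (h23 : ⁅b 1, b 2⁆ = b 0)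
    (h31 : ⁅b 2, b 0⁆ = b 1) (i j k : Fin 3) (s : ℝ)
    (hs : TstarAux.cp (Pi.single i 1) (Pi.single j 1) = s • (Pi.single k 1 : Fin 3 → ℝ)) :
    ⁅b i, b.dualBasis j⁆ = s • b.dualBasis k := by
  refine b.ext fun m => ?_
  rw [coord_cobracket b h12 h23 h31]
  have hw : (fun k' => b.dualBasis j (b k')) = (Pi.single j 1 : Fin 3 → ℝ) := funext fun k' => by
    rw [Module.Basis.dualBasis_apply_self, Pi.single_apply]
  rw [equivFun_basis, hw, hs]
  have h1 : (s • (Pi.single k 1 : Fin 3 → ℝ)) m = s * (if m = k then 1 else 0) := by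
    rw [Pi.smul_apply, Pi.single_apply, smul_eq_mul]
  have h2 : (s • b.dualBasis k) (b m) = s * (if m = k then 1 else 0) := by
    rw [LinearMap.smul_apply, Module.Basis.dualBasis_apply_self, smul_eq_mul]
  rw [h1, h2]

end Coord

section CocycleAux
variable {L : Type*} [LieRing L] [LieAlgebra ℝ L]
variable (b : Module.Basis (Fin 3) ℝ L)

lemma tbr (x y : L × Module.Dual ℝ L) :
    ⁅x, y⁆ = (⁅x.1, y.1⁆, ⁅x.1, y.2⁆ - ⁅y.1, x.2⁆) := rfl

lemma br_inl_inl (x y : L) :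
    ⁅((x, 0) : L × Module.Dual ℝ L), ((y, 0) : L × Module.Dual ℝ L)⁆ = (⁅x, y⁆, 0) := by
  rw [tbr]; refine Prod.ext rfl ?_; simp

lemma br_inl_inr (x : L) (α : Module.Dual ℝ L) :
    ⁅((x, 0) : L × Module.Dual ℝ L), ((0, α) : L × Module.Dual ℝ L)⁆ = (0, ⁅x, α⁆) := by
  rw [tbr]; refine Prod.ext ?_ ?_ <;> simp

lemma br_inr_inl (x : L) (α : Module.Dual ℝ L) :
    ⁅((0, α) : L × Module.Dual ℝ L), ((x, 0) : L × Module.Dual ℝ L)⁆ = (0, -⁅x, α⁆) := by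
  rw [tbr]; refine Prod.ext ?_ ?_ <;> simp

lemma br_inr_inr (α β : Module.Dual ℝ L) :
    ⁅((0, α) : L × Module.Dual ℝ L), ((0, β) : L × Module.Dual ℝ L)⁆ = 0 := by
  rw [tbr]
  refine Prod.ext ?_ ?_ <;> simp

lemma neg_inr (γ : Module.Dual ℝ L) :
    ((0, -γ) : L × Module.Dual ℝ L) = -((0, γ) : L × Module.Dual ℝ L) := by
  refine Prod.ext ?_ ?_ <;> simp

lemma cocycle_skew {V : Type*} [AddCommGroup V] [Module ℝ V] (θ : V →ₗ[ℝ] V →ₗ[ℝ] ℝ)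
    (halt : ∀ u, θ u u = 0) (u v : V) : θ u v = -θ v u := by
  have h := halt (u + v)
  simp only [map_add, LinearMap.add_apply, halt u, halt v, zero_add, add_zero] at h
  linarith

lemma inl_eq_sum (u : L) :
    ((u, 0) : L × Module.Dual ℝ L) = ∑ a, b.repr u a • ((b a, 0) : L × Module.Dual ℝ L) := by
  refine Prod.ext ?_ ?_
  · rw [Prod.fst_sum]
    simp only [Prod.smul_mk]
    exact (b.sum_repr u).symm
  · rw [Prod.snd_sum]
    simp

lemma cocycle_struct (h12 : ⁅b 0, b 1⁆ = b 2) (h23 : ⁅b 1, b 2⁆ = b 0) (h31 : ⁅b 2, b 0⁆ = b 1)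
    (θ : (L × Module.Dual ℝ L) →ₗ[ℝ] (L × Module.Dual ℝ L) →ₗ[ℝ] ℝ)
    (hθ : IsTwoCocycle θ) :
    (∀ α β : Module.Dual ℝ L, θ (0, α) (0, β) = 0) ∧
    (∀ i j : Fin 3, θ (b i, 0) (0, b.dualBasis j) = - θ (b j, 0) (0, b.dualBasis i)) := by
  obtain ⟨halt, hcoc⟩ := hθ
  have hskew := cocycle_skew θ halt
  have sgl : ∀ i j k : Fin 3, ∀ s : ℝ,
      TstarAux.cp (Pi.single i 1) (Pi.single j 1) = s • (Pi.single k 1 : Fin 3 → ℝ) →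
      ⁅b i, b.dualBasis j⁆ = s • b.dualBasis k :=
    fun i j k s hs => cobr_table b h12 h23 h31 i j k s hs
  have c00 : ⁅b 0, b.dualBasis 0⁆ = 0 := by
    simpa using sgl 0 0 0 0 (by refine TstarAux.funext3 ?_ ?_ ?_ <;> simp [Pi.single_apply])
  have c11 : ⁅b 1, b.dualBasis 1⁆ = 0 := by
    simpa using sgl 1 1 0 0 (by refine TstarAux.funext3 ?_ ?_ ?_ <;> simp [Pi.single_apply])
  have c22 : ⁅b 2, b.dualBasis 2⁆ = 0 := by
    simpa using sgl 2 2 0 0 (by refine TstarAux.funext3 ?_ ?_ ?_ <;> simp [Pi.single_apply])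
  have c01 : ⁅b 0, b.dualBasis 1⁆ = b.dualBasis 2 := by
    simpa using sgl 0 1 2 1 (by refine TstarAux.funext3 ?_ ?_ ?_ <;> simp [Pi.single_apply])
  have c02 : ⁅b 0, b.dualBasis 2⁆ = -b.dualBasis 1 := by
    rw [sgl 0 2 1 (-1) (by refine TstarAux.funext3 ?_ ?_ ?_ <;> simp [Pi.single_apply])]
    module
  have c10 : ⁅b 1, b.dualBasis 0⁆ = -b.dualBasis 2 := by
    rw [sgl 1 0 2 (-1) (by refine TstarAux.funext3 ?_ ?_ ?_ <;> simp [Pi.single_apply])]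
    module
  have c12 : ⁅b 1, b.dualBasis 2⁆ = b.dualBasis 0 := by
    simpa using sgl 1 2 0 1 (by refine TstarAux.funext3 ?_ ?_ ?_ <;> simp [Pi.single_apply])
  have c20 : ⁅b 2, b.dualBasis 0⁆ = b.dualBasis 1 := by
    simpa using sgl 2 0 1 1 (by refine TstarAux.funext3 ?_ ?_ ?_ <;> simp [Pi.single_apply])
  have c21 : ⁅b 2, b.dualBasis 1⁆ = -b.dualBasis 0 := by
    rw [sgl 2 1 0 (-1) (by refine TstarAux.funext3 ?_ ?_ ?_ <;> simp [Pi.single_apply])]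
    module
  -- dual-dual pairings vanish on basis
  have S20 : θ (0, b.dualBasis 2) (0, b.dualBasis 0) = 0 := by
    have t := hcoc (b 0, 0) (0, b.dualBasis 0) (0, b.dualBasis 1)
    rw [br_inl_inr, c00, br_inr_inr, br_inr_inl, c01, neg_inr] at t
    simp only [Prod.mk_zero_zero, map_zero, LinearMap.zero_apply, map_neg, LinearMap.neg_apply,
      zero_add, add_zero, neg_eq_zero] at t
    linarith
  have S10 : θ (0, b.dualBasis 1) (0, b.dualBasis 0) = 0 := by
    have t := hcoc (b 0, 0) (0, b.dualBasis 0) (0, b.dualBasis 2)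
    rw [br_inl_inr, c00, br_inr_inr, br_inr_inl, c02, neg_neg] at t
    simp only [Prod.mk_zero_zero, map_zero, LinearMap.zero_apply,
      zero_add, add_zero] at t
    linarith
  have S01 : θ (0, b.dualBasis 0) (0, b.dualBasis 1) = 0 := by
    have t := hcoc (b 1, 0) (0, b.dualBasis 1) (0, b.dualBasis 2)
    rw [br_inl_inr, c11, br_inr_inr, br_inr_inl, c12, neg_inr] at t
    simp only [Prod.mk_zero_zero, map_zero, LinearMap.zero_apply, map_neg, LinearMap.neg_apply,
      zero_add, add_zero, neg_eq_zero] at t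
    linarith
  have S12 : θ (0, b.dualBasis 1) (0, b.dualBasis 2) = 0 := by
    have t := hcoc (b 2, 0) (0, b.dualBasis 2) (0, b.dualBasis 0)
    rw [br_inl_inr, c22, br_inr_inr, br_inr_inl, c20, neg_inr] at t
    simp only [Prod.mk_zero_zero, map_zero, LinearMap.zero_apply, map_neg, LinearMap.neg_apply,
      zero_add, add_zero, neg_eq_zero] at t
    linarith
  have hS : ∀ i j : Fin 3, θ (0, b.dualBasis i) (0, b.dualBasis j) = 0 := by
    intro i j
    match i, j with
    | 0, 0 => exact halt _
    | 0, 1 => exact S01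
    | 0, 2 => rw [hskew, S20, neg_zero]
    | 1, 0 => exact S10
    | 1, 1 => exact halt _
    | 1, 2 => exact S12
    | 2, 0 => exact S20
    | 2, 1 => rw [hskew, S12, neg_zero]
    | 2, 2 => exact halt _
  have hcompl : θ.compl₁₂ (LinearMap.inr ℝ L (Module.Dual ℝ L))
      (LinearMap.inr ℝ L (Module.Dual ℝ L)) = 0 :=
    b.dualBasis.ext fun i => b.dualBasis.ext fun j => by
      simpa only [LinearMap.compl₁₂_apply, LinearMap.inr_apply, LinearMap.zero_apply] using hS i j
  have hS' : ∀ α β : Module.Dual ℝ L, θ (0, α) (0, β) = 0 := by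
    intro α β
    have h0 : θ.compl₁₂ (LinearMap.inr ℝ L (Module.Dual ℝ L))
        (LinearMap.inr ℝ L (Module.Dual ℝ L)) α β = 0 := by rw [hcompl]; simp
    simpa only [LinearMap.compl₁₂_apply, LinearMap.inr_apply] using h0
  -- mixed pairings
  have t1 : θ (b 2, 0) (0, b.dualBasis 2) - θ (b 0, 0) (0, b.dualBasis 0)
      - θ (b 1, 0) (0, b.dualBasis 1) = 0 := by
    have t := hcoc (b 0, 0) (b 1, 0) (0, b.dualBasis 2)
    rw [br_inl_inl, h12, br_inl_inr, c12, br_inr_inl, c02, neg_neg] at t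
    rw [hskew (0, b.dualBasis 0) (b 0, 0), hskew (0, b.dualBasis 1) (b 1, 0)] at t
    linarith
  have t2 : θ (b 0, 0) (0, b.dualBasis 0) - θ (b 1, 0) (0, b.dualBasis 1)
      - θ (b 2, 0) (0, b.dualBasis 2) = 0 := by
    have t := hcoc (b 1, 0) (b 2, 0) (0, b.dualBasis 0)
    rw [br_inl_inl, h23, br_inl_inr, c20, br_inr_inl, c10, neg_neg] at t
    rw [hskew (0, b.dualBasis 1) (b 1, 0), hskew (0, b.dualBasis 2) (b 2, 0)] at t
    linarith
  have t3 : θ (b 1, 0) (0, b.dualBasis 1) - θ (b 2, 0) (0, b.dualBasis 2)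
      - θ (b 0, 0) (0, b.dualBasis 0) = 0 := by
    have t := hcoc (b 2, 0) (b 0, 0) (0, b.dualBasis 1)
    rw [br_inl_inl, h31, br_inl_inr, c01, br_inr_inl, c21, neg_neg] at t
    rw [hskew (0, b.dualBasis 2) (b 2, 0), hskew (0, b.dualBasis 0) (b 0, 0)] at t
    linarith
  have o1 : θ (b 2, 0) (0, b.dualBasis 0) + θ (b 0, 0) (0, b.dualBasis 2) = 0 := by
    have t := hcoc (b 0, 0) (b 1, 0) (0, b.dualBasis 0)
    rw [br_inl_inl, h12, br_inl_inr, c10, br_inr_inl, c00, neg_zero, neg_inr] at t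
    simp only [Prod.mk_zero_zero, map_zero, LinearMap.zero_apply, map_neg,
      LinearMap.neg_apply, add_zero] at t
    rw [hskew (0, b.dualBasis 2) (b 0, 0)] at t
    linarith
  have o2 : θ (b 2, 0) (0, b.dualBasis 1) + θ (b 1, 0) (0, b.dualBasis 2) = 0 := by
    have t := hcoc (b 0, 0) (b 1, 0) (0, b.dualBasis 1)
    rw [br_inl_inl, h12, br_inl_inr, c11, br_inr_inl, c01, neg_inr] at t
    simp only [Prod.mk_zero_zero, map_zero, LinearMap.zero_apply, map_neg,
      LinearMap.neg_apply, add_zero, zero_add] at t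
    rw [hskew (0, b.dualBasis 2) (b 1, 0)] at t
    linarith
  have o3 : θ (b 0, 0) (0, b.dualBasis 1) + θ (b 1, 0) (0, b.dualBasis 0) = 0 := by
    have t := hcoc (b 1, 0) (b 2, 0) (0, b.dualBasis 1)
    rw [br_inl_inl, h23, br_inl_inr, c21, br_inr_inl, c11, neg_zero, neg_inr] at t
    simp only [Prod.mk_zero_zero, map_zero, LinearMap.zero_apply, map_neg,
      LinearMap.neg_apply, add_zero] at t
    rw [hskew (0, b.dualBasis 0) (b 1, 0)] at t
    linarith
  refine ⟨hS', ?_⟩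
  intro i j
  match i, j with
  | 0, 0 => linarith
  | 1, 1 => linarith
  | 2, 2 => linarith
  | 0, 1 => linarith
  | 1, 0 => linarith
  | 0, 2 => linarith
  | 2, 0 => linarith
  | 1, 2 => linarith
  | 2, 1 => linarith

lemma tstar_radical (θ : (L × Module.Dual ℝ L) →ₗ[ℝ] (L × Module.Dual ℝ L) →ₗ[ℝ] ℝ)
    (hS' : ∀ α β : Module.Dual ℝ L, θ (0, α) (0, β) = 0) (φ : Module.Dual ℝ L)
    (hφbasis : ∀ j, θ (0, φ) (b j, 0) = 0) : ∀ v, θ (0, φ) v = 0 := by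
  intro v
  have hv : v = ((v.1, 0) : L × Module.Dual ℝ L) + ((0 : L), v.2) := by
    refine Prod.ext ?_ ?_ <;> simp
  rw [hv, map_add]
  have h1 : θ (0, φ) (v.1, 0) = 0 := by
    rw [inl_eq_sum b v.1, map_sum]
    refine Finset.sum_eq_zero fun a _ => ?_
    rw [map_smul, hφbasis a, smul_zero]
  rw [h1, hS' φ v.2, add_zero]

lemma no_radical_common (h12 : ⁅b 0, b 1⁆ = b 2) (h23 : ⁅b 1, b 2⁆ = b 0)
    (h31 : ⁅b 2, b 0⁆ = b 1) {k : ℕ}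
    (θ : Fin k → ((L × Module.Dual ℝ L) →ₗ[ℝ] (L × Module.Dual ℝ L) →ₗ[ℝ] ℝ))
    (hcoc : ∀ i, IsTwoCocycle (θ i))
    (hnd : ∀ u : L × Module.Dual ℝ L, (∀ i, ∀ v, θ i u v = 0) → u = 0)
    (c : Fin 3 → ℝ) (hc : c ≠ 0)
    (hker : ∀ i j, ∑ a, c a * θ i ((b a, 0)) ((0, b.dualBasis j)) = 0) : False := by
  set φ : Module.Dual ℝ L :=
    c 0 • b.dualBasis 0 + c 1 • b.dualBasis 1 + c 2 • b.dualBasis 2 with hφ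
  have hφc : ∀ j, φ (b j) = c j := by
    intro j
    match j with
    | 0 => simp [hφ, Module.Basis.dualBasis_apply_self]
    | 1 => simp [hφ, Module.Basis.dualBasis_apply_self]
    | 2 => simp [hφ, Module.Basis.dualBasis_apply_self]
  have hφ0 : φ ≠ 0 := by
    intro h
    refine hc (TstarAux.funext3 ?_ ?_ ?_) <;> rw [← hφc, h] <;> simp
  have hzero : ∀ i v, θ i (0, φ) v = 0 := by
    intro i
    obtain ⟨hS', hA⟩ := cocycle_struct b h12 h23 h31 (θ i) (hcoc i)
    have hskew := cocycle_skew (θ i) (hcoc i).1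
    refine tstar_radical b (θ i) hS' φ ?_
    intro j
    have hsplit : ((0, φ) : L × Module.Dual ℝ L) =
        c 0 • ((0, b.dualBasis 0) : L × Module.Dual ℝ L)
        + c 1 • ((0, b.dualBasis 1) : L × Module.Dual ℝ L)
        + c 2 • ((0, b.dualBasis 2) : L × Module.Dual ℝ L) := by
      refine Prod.ext ?_ ?_ <;> simp [hφ]
    rw [hsplit, map_add, map_add, map_smul, map_smul, map_smul, LinearMap.add_apply,
      LinearMap.add_apply, LinearMap.smul_apply, LinearMap.smul_apply, LinearMap.smul_apply]
    rw [hskew (0, b.dualBasis 0) (b j, 0), hskew (0, b.dualBasis 1) (b j, 0),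
      hskew (0, b.dualBasis 2) (b j, 0), hA j 0, hA j 1, hA j 2]
    have hk := hker i j
    rw [Fin.sum_univ_three] at hk
    simp only [smul_eq_mul, neg_neg]
    linarith
  have h0 := hnd (0, φ) hzero
  exact hφ0 (congrArg Prod.snd h0)

end CocycleAux

section SubalgAux
open Module
variable {L : Type*} [LieRing L] [LieAlgebra ℝ L]
variable (b : Module.Basis (Fin 3) ℝ L)

lemma subalg_struct (h12 : ⁅b 0, b 1⁆ = b 2) (h23 : ⁅b 1, b 2⁆ = b 0) (h31 : ⁅b 2, b 0⁆ = b 1)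
    (H : LieSubalgebra ℝ (L × Module.Dual ℝ L))
    (hH : finrank ℝ H = 4 ∨ finrank ℝ H = 5) :
    ∃ u : L, u ≠ 0 ∧ (∃ β : Module.Dual ℝ L, ((u, β) : L × Module.Dual ℝ L) ∈ H) ∧
      (∀ α : Module.Dual ℝ L, (((0 : L), α) : L × Module.Dual ℝ L) ∈ H) := by
  replace hH : finrank ℝ H.toSubmodule = 4 ∨ finrank ℝ H.toSubmodule = 5 := hH
  haveI : FiniteDimensional ℝ L := Module.Finite.of_basis b
  haveI : FiniteDimensional ℝ (Module.Dual ℝ L) := Module.Finite.of_basis b.dualBasis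
  have hD3 : finrank ℝ (Module.Dual ℝ L) = 3 := by
    rw [finrank_eq_card_basis b.dualBasis]; simp
  set f : (L × Module.Dual ℝ L) →ₗ[ℝ] (Fin 3 → ℝ) :=
    (b.equivFun.toLinearMap).comp (LinearMap.fst ℝ L (Module.Dual ℝ L)) with hf
  set g : H.toSubmodule →ₗ[ℝ] (Fin 3 → ℝ) := f.comp H.toSubmodule.subtype with hg
  set W0 : Submodule ℝ (Module.Dual ℝ L) :=
    H.toSubmodule.comap (LinearMap.inr ℝ L (Module.Dual ℝ L)) with hW0
  have hgx : ∀ x : H.toSubmodule, g x = b.equivFun (x : L × Module.Dual ℝ L).1 := fun x => rfl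
  have hmemW0 : ∀ α : Module.Dual ℝ L, α ∈ W0 ↔ (((0 : L), α) : L × Module.Dual ℝ L) ∈ H := by
    intro α
    constructor
    · intro h; exact h
    · intro h; exact h
  -- rank-nullity
  have hrn := LinearMap.finrank_range_add_finrank_ker g
  -- kernel of g is isomorphic to W0
  have hker_fst : ∀ x : LinearMap.ker g, ((x : H.toSubmodule) : L × Module.Dual ℝ L).1 = 0 := by
    intro x
    have hx : g x = 0 := x.2
    rw [hgx] at hx
    exact b.equivFun.map_eq_zero_iff.mp hx
  have hmem : ∀ x : LinearMap.ker g,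
      ((x : H.toSubmodule) : L × Module.Dual ℝ L).2 ∈ W0 := by
    intro x
    have h1 : (LinearMap.inr ℝ L (Module.Dual ℝ L)) ((x : H.toSubmodule) : L × Module.Dual ℝ L).2
        = ((x : H.toSubmodule) : L × Module.Dual ℝ L) := by
      refine Prod.ext ?_ ?_
      · rw [hker_fst x]; rfl
      · rfl
    show (LinearMap.inr ℝ L (Module.Dual ℝ L)) _ ∈ H.toSubmodule
    rw [h1]
    exact (x : H.toSubmodule).2
  let q : LinearMap.ker g →ₗ[ℝ] W0 :=
    ((LinearMap.snd ℝ L (Module.Dual ℝ L)).comp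
      (H.toSubmodule.subtype.comp (LinearMap.ker g).subtype)).codRestrict W0 hmem
  have hqbij : Function.Bijective q := by
    constructor
    · intro x y hxy
      have h2 : ((x : H.toSubmodule) : L × Module.Dual ℝ L).2
          = ((y : H.toSubmodule) : L × Module.Dual ℝ L).2 := congrArg Subtype.val hxy
      apply Subtype.ext; apply Subtype.ext
      refine Prod.ext ?_ h2
      rw [hker_fst x, hker_fst y]
    · intro w
      have hwH : (((0 : L), (w : Module.Dual ℝ L)) : L × Module.Dual ℝ L) ∈ H.toSubmodule := w.2
      have hker : g ⟨((0 : L), (w : Module.Dual ℝ L)), hwH⟩ = 0 := by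
        rw [hgx]; simp
      exact ⟨⟨⟨((0 : L), (w : Module.Dual ℝ L)), hwH⟩, hker⟩, rfl⟩
  have hker_w : finrank ℝ (LinearMap.ker g) = finrank ℝ W0 :=
    (LinearEquiv.ofBijective q hqbij).finrank_eq
  set P' : Submodule ℝ (Fin 3 → ℝ) := LinearMap.range g with hP'
  have hsum : finrank ℝ P' + finrank ℝ W0 = finrank ℝ H.toSubmodule := by
    rw [← hker_w]; exact hrn
  have hfin3 : finrank ℝ (Fin 3 → ℝ) = 3 := Module.finrank_fin_fun ℝ
  have hP'le : finrank ℝ P' ≤ 3 := by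
    have := Submodule.finrank_le P'
    omega
  have hW0le : finrank ℝ W0 ≤ 3 := by
    have := Submodule.finrank_le W0
    omega
  -- P' is closed under the cross product
  have hPcp : ∀ x' ∈ P', ∀ y' ∈ P', TstarAux.cp x' y' ∈ P' := by
    rintro x' hx' y' hy'
    obtain ⟨x, rfl⟩ := hx'
    obtain ⟨y, rfl⟩ := hy'
    have hlie : ⁅(x : L × Module.Dual ℝ L), (y : L × Module.Dual ℝ L)⁆ ∈ H.toSubmodule :=
      H.lie_mem x.2 y.2
    refine ⟨⟨⁅(x : L × Module.Dual ℝ L), (y : L × Module.Dual ℝ L)⁆, hlie⟩, ?_⟩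
    rw [hgx, hgx, hgx]
    have h1 : (⁅(x : L × Module.Dual ℝ L), (y : L × Module.Dual ℝ L)⁆).1
        = ⁅(x : L × Module.Dual ℝ L).1, (y : L × Module.Dual ℝ L).1⁆ := rfl
    rw [h1, coord_bracket b h12 h23 h31]
  -- coadjoint action in coordinates
  have coordco : ∀ (u : L) (α : Module.Dual ℝ L),
      b.dualBasis.equivFun ⁅u, α⁆ = TstarAux.cp (b.equivFun u) (b.dualBasis.equivFun α) := by
    intro u α
    funext i
    rw [Module.Basis.dualBasis_equivFun, coord_cobracket b h12 h23 h31]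
    congr 1
    funext m
    rw [Module.Basis.dualBasis_equivFun]
  set W' : Submodule ℝ (Fin 3 → ℝ) := W0.map b.dualBasis.equivFun.toLinearMap with hW'
  have hW'rank : finrank ℝ W' = finrank ℝ W0 :=
    LinearEquiv.finrank_map_eq b.dualBasis.equivFun W0
  have hcases : finrank ℝ P' = 0 ∨ finrank ℝ P' = 1 ∨ finrank ℝ P' = 2 ∨ finrank ℝ P' = 3 := by
    omega
  rcases hcases with h0 | h1 | h2 | h3
  · -- finrank P' = 0 : finrank W0 ≥ 4, impossible
    exfalso; rcases hH with hH | hH <;> omega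
  · -- finrank P' = 1 : forces finrank H = 4, W0 = ⊤
    have hW03 : finrank ℝ W0 = 3 := by rcases hH with hH | hH <;> omega
    have hWtop : W0 = ⊤ := Submodule.eq_top_of_finrank_eq (by rw [hW03, hD3])
    have hall : ∀ α : Module.Dual ℝ L, (((0 : L), α) : L × Module.Dual ℝ L) ∈ H := by
      intro α
      have : α ∈ W0 := by rw [hWtop]; trivial
      exact (hmemW0 α).mp this
    have hP'nebot : P' ≠ ⊥ := by
      intro hbot
      rw [hbot] at h1
      simp [finrank_bot] at h1
    obtain ⟨cc, hccP, hcc0⟩ := (Submodule.ne_bot_iff P').mp hP'nebot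
    obtain ⟨x, hxc⟩ := hccP
    refine ⟨(x : L × Module.Dual ℝ L).1, ?_, ⟨(x : L × Module.Dual ℝ L).2, ?_⟩, hall⟩
    · intro hu0
      apply hcc0
      rw [← hxc, hgx, hu0]
      simp
    · have : ((x : L × Module.Dual ℝ L).1, (x : L × Module.Dual ℝ L).2)
          = (x : L × Module.Dual ℝ L) := rfl
      rw [this]
      exact x.2
  · exact absurd h2 (fun h => TstarAux.no_two_dim P' hPcp h)
  · -- finrank P' = 3 : P' = ⊤, W' invariant, so finrank W0 ∈ {0,3}: contradiction
    have hPtop : P' = ⊤ := Submodule.eq_top_of_finrank_eq (by rw [h3, hfin3])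
    have hWinv : ∀ c : Fin 3 → ℝ, ∀ w ∈ W', TstarAux.cp c w ∈ W' := by
      intro c w hw
      obtain ⟨α, hα, rfl⟩ := hw
      have hc : c ∈ P' := by rw [hPtop]; trivial
      obtain ⟨x, hxc⟩ := hc
      have hα' : (((0 : L), α) : L × Module.Dual ℝ L) ∈ H := (hmemW0 α).mp hα
      have hlie : ⁅(x : L × Module.Dual ℝ L), (((0 : L), α) : L × Module.Dual ℝ L)⁆
          ∈ H.toSubmodule := H.lie_mem x.2 hα'
      have heq : ⁅(x : L × Module.Dual ℝ L), (((0 : L), α) : L × Module.Dual ℝ L)⁆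
          = (((0 : L), ⁅(x : L × Module.Dual ℝ L).1, α⁆) : L × Module.Dual ℝ L) := by
        rw [tbr]
        refine Prod.ext ?_ ?_ <;> simp
      rw [heq] at hlie
      have hmem2 : ⁅(x : L × Module.Dual ℝ L).1, α⁆ ∈ W0 := hlie
      refine ⟨⁅(x : L × Module.Dual ℝ L).1, α⁆, hmem2, ?_⟩
      show b.dualBasis.equivFun ⁅(x : L × Module.Dual ℝ L).1, α⁆
          = TstarAux.cp c (b.dualBasis.equivFun α)
      rw [coordco, ← hxc, hgx]
    have hW0pos : 0 < finrank ℝ W0 := by omega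
    have hW'nebot : W' ≠ ⊥ := by
      intro hbot
      rw [← hW'rank, hbot] at hW0pos
      simp [finrank_bot] at hW0pos
    obtain ⟨v, hvW, hv0⟩ := (Submodule.ne_bot_iff W').mp hW'nebot
    have hW'top : W' = ⊤ := TstarAux.invariant_eq_top W' hWinv v hvW hv0
    have : finrank ℝ W' = 3 := by rw [hW'top]; simpa using hfin3
    exfalso; rcases hH with hH | hH <;> omega

end SubalgAux

/-- The `T*`-extension `T*su(2)` of `su(2)` (the 3-dimensional real Lie algebra with
basis `e₁, e₂, e₃` and brackets `[e₁,e₂] = e₃`, `[e₂,e₃] = e₁`, `[e₃,e₁] = e₂`) admits no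
`k`-symplectic structure for any `k ≥ 1`. -/
theorem tstar_su2_no_ksymplectic
    {L : Type*} [LieRing L] [LieAlgebra ℝ L]
    (b : Module.Basis (Fin 3) ℝ L)
    (h12 : ⁅b 0, b 1⁆ = b 2) (h23 : ⁅b 1, b 2⁆ = b 0) (h31 : ⁅b 2, b 0⁆ = b 1) :
    ∀ (n k : ℕ), 1 ≤ k →
      ∀ (H : LieSubalgebra ℝ (L × Module.Dual ℝ L))
        (θ : Fin k → ((L × Module.Dual ℝ L) →ₗ[ℝ] (L × Module.Dual ℝ L) →ₗ[ℝ] ℝ)),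
        ¬ IsKSymplectic n k H θ := by
  intro n k hk H θ hKS
  obtain ⟨hdim, hHdim, hcoc, hnd, hvan⟩ := hKS
  haveI : FiniteDimensional ℝ L := Module.Finite.of_basis b
  haveI : FiniteDimensional ℝ (Module.Dual ℝ L) := Module.Finite.of_basis b.dualBasis
  have hL3 : Module.finrank ℝ L = 3 := by rw [Module.finrank_eq_card_basis b]; simp
  have hD3 : Module.finrank ℝ (Module.Dual ℝ L) = 3 := by
    rw [Module.finrank_eq_card_basis b.dualBasis]; simp
  have hM6 : Module.finrank ℝ (L × Module.Dual ℝ L) = 6 := by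
    rw [Module.finrank_prod, hL3, hD3]
  rw [hM6] at hdim
  have hn0 : n ≠ 0 := by rintro rfl; simp at hdim
  have hk5 : k ≤ 5 := by
    have h1 : k + 1 ≤ n * (k + 1) := Nat.le_mul_of_pos_left (k + 1) (Nat.pos_of_ne_zero hn0)
    omega
  interval_cases k
  · -- k = 1 : the mixed part of the 2-cocycle θ 0 is an antisymmetric 3×3 matrix,
    -- hence has a kernel, yielding a nonzero radical element in the dual part.
    obtain ⟨hS', hA⟩ := cocycle_struct b h12 h23 h31 (θ 0) (hcoc 0)
    by_cases hv : θ 0 (b 1, 0) (0, b.dualBasis 2) = 0 ∧ θ 0 (b 2, 0) (0, b.dualBasis 0) = 0 ∧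
        θ 0 (b 0, 0) (0, b.dualBasis 1) = 0
    · refine no_radical_common b h12 h23 h31 θ hcoc hnd ![1, 0, 0] ?_ ?_
      · intro h; have h0 := congrFun h 0; norm_num at h0
      · intro i j
        have hi : i = 0 := Subsingleton.elim i 0
        subst hi
        rw [Fin.sum_univ_three]
        simp only [Matrix.cons_val_zero, Matrix.cons_val_one, Matrix.head_cons, one_mul,
          Matrix.cons_val_two, Matrix.tail_cons, zero_mul, add_zero]
        match j with
        | 0 => have := hA 0 0; linarith
        | 1 => linarith [hv.2.2]
        | 2 => linarith [hA 0 2, hv.2.1]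
    · refine no_radical_common b h12 h23 h31 θ hcoc hnd
        ![θ 0 (b 1, 0) (0, b.dualBasis 2), θ 0 (b 2, 0) (0, b.dualBasis 0),
          θ 0 (b 0, 0) (0, b.dualBasis 1)] ?_ ?_
      · intro h
        exact hv ⟨by simpa using congrFun h 0, by simpa using congrFun h 1,
          by simpa using congrFun h 2⟩
      · intro i j
        have hi : i = 0 := Subsingleton.elim i 0
        subst hi
        rw [Fin.sum_univ_three]
        simp only [Matrix.cons_val_zero, Matrix.cons_val_one, Matrix.head_cons,
          Matrix.cons_val_two, Matrix.tail_cons]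
        match j with
        | 0 => linear_combination (θ 0 (b 1, 0) (0, b.dualBasis 2) / 2) * hA 0 0
            + θ 0 (b 2, 0) (0, b.dualBasis 0) * hA 1 0
        | 1 => linear_combination (θ 0 (b 2, 0) (0, b.dualBasis 0) / 2) * hA 1 1
            + θ 0 (b 0, 0) (0, b.dualBasis 1) * hA 2 1
        | 2 => linear_combination θ 0 (b 1, 0) (0, b.dualBasis 2) * hA 0 2
            + (θ 0 (b 0, 0) (0, b.dualBasis 1) / 2) * hA 2 2
  · -- k = 2, so n = 2 and dim H = 4
    have hn2 : n = 2 := by omega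
    subst hn2
    obtain ⟨u, hu0, ⟨β, huβ⟩, hall⟩ := subalg_struct b h12 h23 h31 H
      (Or.inl (by rw [hHdim]))
    refine no_radical_common b h12 h23 h31 θ hcoc hnd (b.equivFun u) ?_ ?_
    · intro h; exact hu0 (b.equivFun.map_eq_zero_iff.mp h)
    · intro i j
      obtain ⟨hS', hA⟩ := cocycle_struct b h12 h23 h31 (θ i) (hcoc i)
      have h1 := hvan i (u, β) huβ ((0 : L), b.dualBasis j) (hall (b.dualBasis j))
      have hdecomp : ((u, β) : L × Module.Dual ℝ L) = (u, 0) + ((0 : L), β) := by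
        refine Prod.ext ?_ ?_ <;> simp
      rw [hdecomp, map_add, LinearMap.add_apply, hS' β (b.dualBasis j), add_zero,
        inl_eq_sum b u, map_sum, LinearMap.sum_apply] at h1
      simp only [map_smul, LinearMap.smul_apply, smul_eq_mul] at h1
      simpa only [Module.Basis.equivFun_apply] using h1
  · -- k = 3 : 6 = 4n is impossible
    omega
  · -- k = 4 : 6 = 5n is impossible
    omega
  · -- k = 5, so n = 1 and dim H = 5
    have hn1 : n = 1 := by omega
    subst hn1
    obtain ⟨u, hu0, ⟨β, huβ⟩, hall⟩ := subalg_struct b h12 h23 h31 H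
      (Or.inr (by rw [hHdim]))
    refine no_radical_common b h12 h23 h31 θ hcoc hnd (b.equivFun u) ?_ ?_
    · intro h; exact hu0 (b.equivFun.map_eq_zero_iff.mp h)
    · intro i j
      obtain ⟨hS', hA⟩ := cocycle_struct b h12 h23 h31 (θ i) (hcoc i)
      have h1 := hvan i (u, β) huβ ((0 : L), b.dualBasis j) (hall (b.dualBasis j))
      have hdecomp : ((u, β) : L × Module.Dual ℝ L) = (u, 0) + ((0 : L), β) := by
        refine Prod.ext ?_ ?_ <;> simp
      rw [hdecomp, map_add, LinearMap.add_apply, hS' β (b.dualBasis j), add_zero,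
        inl_eq_sum b u, map_sum, LinearMap.sum_apply] at h1
      simp only [map_smul, LinearMap.smul_apply, smul_eq_mul] at h1
      simpa only [Module.Basis.equivFun_apply] using h1
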